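/- Let R be a commutative ring, M a commutative monoid, and T ⊆ M a subset. Then the monoid algebra R[M − T] of the monoid of differences of M with negatives in T, viewed as an R[M]-algebra via R[ε_T], is canonically isomorphic to the localization of R[M] at the multiplicative set exp_{R,M}(T) of images of elements of T. -/

import Mathlib

open Finsupp AddMonoidAlgebra

private lemma single_one_mul_eq_mapDomain {R : Type*} [CommRing R] {M : Type*} [AddCommMonoid M]
    (s : M) (x : AddMonoidAlgebra R M) :
    AddMonoidAlgebra.single s (1 : R) * x = AddMonoidAlgebra.mapDomain (fun a => s + a) x := by
  induction x using AddMonoidAlgebra.induction with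
  | zero => simp
  | single_add a b f _ _ ih =>
      rw [mul_add, ih, AddMonoidAlgebra.mapDomain_add, AddMonoidAlgebra.mapDomain_single]
      congr 1
      rw [AddMonoidAlgebra.single_mul_single, one_mul]

/-- Let `R` be a commutative ring, `M` a commutative monoid and `T ⊆ M`.
Then the monoid algebra `R[M − T]` of the monoid of differences of `M` with
negatives in `T` (i.e. the localization of `M` at the submonoid generated by `T`),
viewed as an `R[M]`-algebra via `R[ε_T]`, is the localization of `R[M]` at the
multiplicative set generated by the elements `e_t = exp_{R,M}(t)` for `t ∈ T`. -/
theorem monoidAlgebra_diff_isLocalization (R : Type*) [CommRing R]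
    (M : Type*) [AddCommMonoid M] (T : Set M) :
    letI S' : AddSubmonoid M := AddSubmonoid.closure T
    letI : Algebra (AddMonoidAlgebra R M) (AddMonoidAlgebra R (AddLocalization S')) :=
      (AddMonoidAlgebra.mapDomainRingHom R
        ((AddLocalization.addMonoidOf S').toAddMonoidHom)).toAlgebra
    IsLocalization
      (Submonoid.closure ((fun t => AddMonoidAlgebra.single t (1 : R)) '' T))
      (AddMonoidAlgebra R (AddLocalization S')) := by
  classical
  set S' : AddSubmonoid M := AddSubmonoid.closure T with hS'
  set ε := (AddLocalization.addMonoidOf S').toAddMonoidHom with hε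
  set f : AddMonoidAlgebra R M →+* AddMonoidAlgebra R (AddLocalization S') :=
    AddMonoidAlgebra.mapDomainRingHom R ε with hf
  letI : Algebra (AddMonoidAlgebra R M) (AddMonoidAlgebra R (AddLocalization S')) := f.toAlgebra
  have halg : (algebraMap (AddMonoidAlgebra R M) (AddMonoidAlgebra R (AddLocalization S'))) = f :=
    rfl
  set Sub := Submonoid.closure ((fun t => AddMonoidAlgebra.single t (1 : R)) '' T) with hSub
  have hfapp : ∀ x : AddMonoidAlgebra R M, f x = AddMonoidAlgebra.mapDomain ε x := fun _ => rfl
  have hfs : ∀ (m : M) (r : R), f (AddMonoidAlgebra.single m r)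
      = AddMonoidAlgebra.single (ε m) r := by
    intro m r
    rw [hfapp, AddMonoidAlgebra.mapDomain_single]
  -- single s 1 for s ∈ S' is in Sub
  have hmem : ∀ s ∈ S', AddMonoidAlgebra.single s (1 : R) ∈ Sub := by
    intro s hs
    induction hs using AddSubmonoid.closure_induction with
    | mem t ht => exact Submonoid.subset_closure ⟨t, ht, rfl⟩
    | zero =>
        have : AddMonoidAlgebra.single (0 : M) (1 : R) = 1 := rfl
        rw [this]; exact one_mem _
    | add a b _ _ ha hb =>
        have : AddMonoidAlgebra.single (a + b) (1 : R)
            = AddMonoidAlgebra.single a (1 : R) * AddMonoidAlgebra.single b (1 : R) := by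
          rw [AddMonoidAlgebra.single_mul_single, one_mul]
        rw [this]; exact mul_mem ha hb
  -- single (ε s) 1 is a unit for s ∈ S'
  have hunit : ∀ s ∈ S', IsUnit (AddMonoidAlgebra.single (ε s) (1 : R)) := by
    intro s hs
    obtain ⟨u, hu⟩ := (AddLocalization.addMonoidOf S').map_addUnits ⟨s, hs⟩
    have hu' : (↑u : AddLocalization S') = ε s := hu
    refine IsUnit.of_mul_eq_one (AddMonoidAlgebra.single (↑(-u)) (1 : R)) ?_
    rw [AddMonoidAlgebra.single_mul_single, one_mul, ← hu', AddUnits.add_neg]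
    rfl
  refine ⟨?_, ?_, ?_⟩
  · -- map_units
    rintro ⟨y, hy⟩
    simp only [halg]
    induction hy using Submonoid.closure_induction with
    | mem z hz =>
        obtain ⟨t, ht, rfl⟩ := hz
        rw [hfs]
        exact hunit t (AddSubmonoid.subset_closure ht)
    | one => simp
    | mul a b _ _ ha hb => rw [map_mul]; exact ha.mul hb
  · -- surj
    intro z
    induction z using AddMonoidAlgebra.induction with
    | zero => exact ⟨(0, 1), by simp⟩
    | single_add g r z' _ _ ih =>
        obtain ⟨⟨x', s'⟩, hx'⟩ := ih
        obtain ⟨⟨m, s⟩, hms⟩ := (AddLocalization.addMonoidOf S').surj g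
        have hms' : g + ε ((s : M)) = ε m := hms
        refine ⟨(AddMonoidAlgebra.single m r * (s' : AddMonoidAlgebra R M)
            + x' * AddMonoidAlgebra.single ((s : M)) (1 : R),
          ⟨AddMonoidAlgebra.single ((s : M)) (1 : R), hmem _ s.2⟩ * s'), ?_⟩
        simp only [halg, Submonoid.coe_mul, map_add, map_mul] at hx' ⊢
        have h1 : AddMonoidAlgebra.single g r * f (AddMonoidAlgebra.single ((s : M)) (1 : R))
            = f (AddMonoidAlgebra.single m r) := by
          rw [hfs, hfs, AddMonoidAlgebra.single_mul_single, mul_one, hms']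
        rw [add_mul, ← mul_assoc, h1,
          mul_left_comm, hx']
        ring
  · -- exists_of_eq
    intro x y hxy
    rw [halg, hfapp, hfapp] at hxy
    replace hxy := congrArg AddMonoidAlgebra.coeff hxy
    simp only [AddMonoidAlgebra.coeff_mapDomain] at hxy
    set F : Finset M := x.coeff.support ∪ y.coeff.support with hF
    have key : ∀ p : M × M, ∃ s, s ∈ S' ∧ (ε p.1 = ε p.2 → s + p.1 = s + p.2) := by
      intro p
      by_cases h : ε p.1 = ε p.2
      · obtain ⟨c, hc⟩ := (AddSubmonoid.LocalizationMap.eq_iff_exists _).mp h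
        exact ⟨c, c.2, fun _ => hc⟩
      · exact ⟨0, zero_mem _, fun h' => absurd h' h⟩
    choose d hd1 hd2 using key
    set s : M := ∑ p ∈ F ×ˢ F, d p with hs
    have hsS : s ∈ S' := AddSubmonoid.sum_mem _ fun p _ => hd1 p
    have hstep : ∀ a ∈ F, ∀ b ∈ F, ε a = ε b → s + a = s + b := by
      intro a ha b hb h
      have hmemp : (a, b) ∈ F ×ˢ F := Finset.mem_product.mpr ⟨ha, hb⟩
      have h2 : d (a, b) + a = d (a, b) + b := hd2 (a, b) h
      have hsplit : s = d (a, b) + ∑ p ∈ (F ×ˢ F).erase (a, b), d p := by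
        rw [hs]; exact (Finset.add_sum_erase _ d hmemp).symm
      rw [hsplit, add_assoc, add_assoc,
        add_comm (∑ p ∈ (F ×ˢ F).erase (a, b), d p) a,
        add_comm (∑ p ∈ (F ×ˢ F).erase (a, b), d p) b, ← add_assoc, ← add_assoc, h2]
    obtain ⟨u, hu⟩ := (AddLocalization.addMonoidOf S').map_addUnits ⟨s, hsS⟩
    have hu' : (↑u : AddLocalization S') = ε s := hu
    -- ε is injective on s + F
    have hinj : Set.InjOn ε ((fun a => s + a) '' ↑F) := by
      rintro _ ⟨a, ha, rfl⟩ _ ⟨b, hb, rfl⟩ h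
      have hab : ε a = ε b := by
        simp only [map_add, ← hu'] at h
        exact (AddUnits.add_right_inj u).mp h
      show s + a = s + b
      exact hstep a (Finset.mem_coe.mp ha) b (Finset.mem_coe.mp hb) hab
    -- φ : subtract ε s
    set φ : AddLocalization S' → AddLocalization S' := fun g => ↑(-u) + g with hφ
    have hφinj : Function.Injective φ := fun a b h => by
      have := congrArg (fun g => (u : AddLocalization S') + g) h
      simpa [hφ, ← add_assoc, u.add_neg] using this
    have hcomp : ∀ w : M →₀ R,
        Finsupp.mapDomain ε w = Finsupp.mapDomain φ
          (Finsupp.mapDomain ε (Finsupp.mapDomain (fun a => s + a) w)) := by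
      intro w
      rw [← Finsupp.mapDomain_comp, ← Finsupp.mapDomain_comp]
      congr 1
      funext a
      simp only [Function.comp, hφ, map_add, ← hu', ← add_assoc]
      rw [AddUnits.neg_add, zero_add]
    have h2 : Finsupp.mapDomain ε (Finsupp.mapDomain (fun a => s + a) x.coeff)
        = Finsupp.mapDomain ε (Finsupp.mapDomain (fun a => s + a) y.coeff) := by
      apply Finsupp.mapDomain_injective hφinj
      rw [← hcomp, ← hcomp, hxy]
    have hsupp : ∀ w : M →₀ R, w.support ⊆ F →
        ↑(Finsupp.mapDomain (fun a => s + a) w).support ⊆ (fun a => s + a) '' (↑F : Set M) := by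
      intro w hw g hg
      obtain ⟨a, ha, rfl⟩ := Finset.mem_image.mp (Finsupp.mapDomain_support (Finset.mem_coe.mp hg))
      exact ⟨a, Finset.mem_coe.mpr (hw ha), rfl⟩
    have h3 : Finsupp.mapDomain (fun a => s + a) x.coeff = Finsupp.mapDomain (fun a => s + a) y.coeff := by
      refine Finsupp.mapDomain_injOn _ hinj ?_ ?_ h2
      · exact hsupp x.coeff (Finset.subset_union_left)
      · exact hsupp y.coeff (Finset.subset_union_right)
    exact ⟨⟨AddMonoidAlgebra.single s (1 : R), hmem s hsS⟩, by
      rw [single_one_mul_eq_mapDomain, single_one_mul_eq_mapDomain]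
      exact AddMonoidAlgebra.coeff_injective (by simpa using h3)⟩
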